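/- arXiv:2111.05236 — 5 statements merged into one kernel-verified Lean document; each statement's English description precedes it below -/
import Mathlib

section
/- Let G be a locally compact Hausdorff topological group, μ a left Haar measure on G, and ν the right Haar measure defined by ν(E) = μ(E⁻¹). For all nonempty compact sets A, B ⊆ G of positive measure, ν(A·B⁻¹)·μ(A·B⁻¹) ≥ ν(A)·μ(B⁻¹); equivalently, the nonunimodular Ruzsa distance satisfies d(A,B) ≥ 0. -/
open Set Pointwise Function MeasureTheory
open scoped ENNReal

/-- The nonunimodular Ruzsa distance
`d(A,B) = log₂( ν(A·B⁻¹)·μ(A·B⁻¹) / (ν(A)·μ(B⁻¹)) )`, where `μ` is a left Haar measure and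
`ν` is the right Haar measure `ν(E) = μ(E⁻¹)`. -/
noncomputable def ruzsaDist {G : Type*} [Group G] [MeasurableSpace G]
    (μ ν : Measure G) (A B : Set G) : ℝ :=
  Real.logb 2 (((ν (A * B⁻¹)).toReal * (μ (A * B⁻¹)).toReal) /
    ((ν A).toReal * (μ B⁻¹).toReal))

/-- **Nonnegativity of the nonunimodular Ruzsa distance.**
For a left Haar measure `μ` on a locally compact Hausdorff group `G` and the right Haar
measure `ν(E) = μ(E⁻¹)`, all nonempty compact `A, B` of positive measure satisfy
`ν(A·B⁻¹)·μ(A·B⁻¹) ≥ ν(A)·μ(B⁻¹)`; equivalently `d(A,B) ≥ 0`. -/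
theorem ruzsaDist_nonneg
    {G : Type*} [Group G] [TopologicalSpace G] [IsTopologicalGroup G]
    [LocallyCompactSpace G] [T2Space G] [MeasurableSpace G] [BorelSpace G]
    (μ ν : Measure G) [μ.IsHaarMeasure] (hν : ∀ E : Set G, ν E = μ E⁻¹)
    (A B : Set G) (hAc : IsCompact A) (hBc : IsCompact B)
    (hAne : A.Nonempty) (hBne : B.Nonempty) (hA0 : 0 < μ A) (hB0 : 0 < μ B) :
    ν A * μ B⁻¹ ≤ ν (A * B⁻¹) * μ (A * B⁻¹) ∧ 0 ≤ ruzsaDist μ ν A B := by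
  obtain ⟨a, ha⟩ := hAne
  obtain ⟨b, hb⟩ := hBne
  have h1 : μ B⁻¹ ≤ μ (A * B⁻¹) := by
    calc μ B⁻¹ = μ (a • B⁻¹) := (measure_smul μ a B⁻¹).symm
    _ ≤ μ (A * B⁻¹) := measure_mono (smul_set_subset_smul ha)
  have hinv : (A * B⁻¹)⁻¹ = B * A⁻¹ := by
    rw [mul_inv_rev, inv_inv]
  have h2 : ν A ≤ ν (A * B⁻¹) := by
    rw [hν, hν, hinv]
    calc μ A⁻¹ = μ (b • A⁻¹) := (measure_smul μ b A⁻¹).symm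
    _ ≤ μ (B * A⁻¹) := measure_mono (smul_set_subset_smul hb)
  have hmain : ν A * μ B⁻¹ ≤ ν (A * B⁻¹) * μ (A * B⁻¹) := mul_le_mul' h2 h1
  refine ⟨hmain, ?_⟩
  rcases eq_or_lt_of_le (le_of_eq (rfl : (0:ℝ) = 0) |>.trans
      (mul_nonneg ENNReal.toReal_nonneg ENNReal.toReal_nonneg :
        (0:ℝ) ≤ (ν A).toReal * (μ B⁻¹).toReal)) with h0 | hden
  · unfold ruzsaDist
    rw [← h0, div_zero, Real.logb_zero]
  · have hABc : IsCompact (A * B⁻¹) := hAc.mul hBc.inv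
    have hfin1 : ν (A * B⁻¹) < ∞ := by
      rw [hν, hinv]; exact (hBc.mul hAc.inv).measure_lt_top
    have hfin2 : μ (A * B⁻¹) < ∞ := hABc.measure_lt_top
    have hnum : (ν A).toReal * (μ B⁻¹).toReal
        ≤ (ν (A * B⁻¹)).toReal * (μ (A * B⁻¹)).toReal := by
      rw [← ENNReal.toReal_mul, ← ENNReal.toReal_mul]
      exact ENNReal.toReal_mono (ENNReal.mul_ne_top hfin1.ne hfin2.ne) hmain
    unfold ruzsaDist
    apply Real.logb_nonneg one_lt_two
    rw [le_div_iff₀ hden]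
    simpa using hnum
end

section
/- Let G be a locally compact Hausdorff topological group, μ a left Haar measure on G, and ν the right Haar measure defined by ν(E) = μ(E⁻¹). For all nonempty compact sets A, B ⊆ G of positive measure and all a, b ∈ G, the nonunimodular Ruzsa distance is invariant under left translations: d(aA, bB) = d(A, B); equivalently, ν(aA·B⁻¹b⁻¹)·μ(aA·B⁻¹b⁻¹) / ( ν(aA)·μ(B⁻¹b⁻¹) ) = ν(A·B⁻¹)·μ(A·B⁻¹) / ( ν(A)·μ(B⁻¹) ). -/
open Set Pointwise Function MeasureTheory
open scoped ENNReal

/-- Right-translation changes a left Haar measure of a compact set by a positive finite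
constant (the value of the modular function). -/
lemma modular_exists {G : Type*} [Group G] [TopologicalSpace G] [IsTopologicalGroup G]
    [LocallyCompactSpace G] [T2Space G] [MeasurableSpace G] [BorelSpace G]
    (μ : Measure G) [μ.IsHaarMeasure] (g : G) :
    ∃ c : ℝ≥0∞, c ≠ 0 ∧ c ≠ ∞ ∧ ∀ S : Set G, IsCompact S → μ (S * {g}) = c * μ S := by
  let μ' : Measure G := μ.map (· * g⁻¹)
  have hmeas : Measurable (· * g⁻¹ : G → G) := measurable_mul_const g⁻¹
  have happ : ∀ S : Set G, MeasurableSet S → μ' S = μ (S * {g}) := by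
    intro S hS
    rw [Measure.map_apply hmeas hS]
    congr 1
    ext x
    simp [Set.mul_singleton, eq_comm, mul_inv_eq_iff_eq_mul]
  have : IsFiniteMeasureOnCompacts μ' := by
    constructor
    intro K hK
    rw [happ K hK.measurableSet]
    exact (hK.mul isCompact_singleton).measure_lt_top
  have key : ∀ S : Set G, IsCompact S →
      μ (S * {g}) = (Measure.haarScalarFactor μ' μ : ℝ≥0∞) * μ S := by
    intro S hS
    rw [← happ S hS.measurableSet]
    simpa using Measure.measure_isMulInvariant_eq_smul_of_isCompact_closure μ' μ
      (s := S) (by rw [hS.isClosed.closure_eq]; exact hS)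
  refine ⟨_, ?_, ENNReal.coe_ne_top, key⟩
  obtain ⟨K, hKc, hK1⟩ := exists_compact_mem_nhds (1 : G)
  have h1 : (0 : ℝ≥0∞) < μ (K * {g}) := by
    have hopen : IsOpen (interior K * {g}) := isOpen_interior.mul_right
    have hne : (interior K * {g}).Nonempty :=
      ⟨1 * g, Set.mul_mem_mul (mem_interior_iff_mem_nhds.2 hK1) rfl⟩
    calc (0 : ℝ≥0∞) < μ (interior K * {g}) := hopen.measure_pos μ hne
      _ ≤ μ (K * {g}) := measure_mono (Set.mul_subset_mul_right interior_subset)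
  rw [key K hKc] at h1
  intro h
  rw [h] at h1
  simp at h1

/-- Left invariance of a left Haar measure for pointwise-set left translations. -/
lemma measure_singleton_mul {G : Type*} [Group G] [TopologicalSpace G] [IsTopologicalGroup G]
    [MeasurableSpace G] [BorelSpace G] (μ : Measure G) [μ.IsHaarMeasure]
    (g : G) (X : Set G) : μ ({g} * X) = μ X := by
  rw [show {g} * X = g • X by
    ext x
    simp only [Set.singleton_mul, Set.mem_image, Set.mem_smul_set, smul_eq_mul]]
  exact measure_smul (μ := μ) g X

/-- **Left translation invariance of the nonunimodular Ruzsa distance.**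
For a left Haar measure `μ` on a locally compact Hausdorff group `G` and the right Haar
measure `ν(E) = μ(E⁻¹)`, all nonempty compact `A, B` of positive measure and all `a, b ∈ G`
satisfy `d(aA, bB) = d(A, B)`; equivalently
`ν(aA·B⁻¹b⁻¹)·μ(aA·B⁻¹b⁻¹)/(ν(aA)·μ(B⁻¹b⁻¹)) = ν(A·B⁻¹)·μ(A·B⁻¹)/(ν(A)·μ(B⁻¹))`. -/
theorem ruzsaDist_translation_invariant
    {G : Type*} [Group G] [TopologicalSpace G] [IsTopologicalGroup G]
    [LocallyCompactSpace G] [T2Space G] [MeasurableSpace G] [BorelSpace G]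
    (μ ν : Measure G) [μ.IsHaarMeasure] (hν : ∀ E : Set G, ν E = μ E⁻¹)
    (A B : Set G) (hAc : IsCompact A) (hBc : IsCompact B)
    (hAne : A.Nonempty) (hBne : B.Nonempty) (hA0 : 0 < μ A) (hB0 : 0 < μ B)
    (a b : G) :
    ruzsaDist μ ν ({a} * A) ({b} * B) = ruzsaDist μ ν A B ∧
    ν ({a} * A * B⁻¹ * {b⁻¹}) * μ ({a} * A * B⁻¹ * {b⁻¹}) /
        (ν ({a} * A) * μ (B⁻¹ * {b⁻¹})) =
      ν (A * B⁻¹) * μ (A * B⁻¹) / (ν A * μ B⁻¹) := by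
  obtain ⟨ca, ca0, caT, hca⟩ := modular_exists μ a⁻¹
  obtain ⟨cb, cb0, cbT, hcb⟩ := modular_exists μ b⁻¹
  have hX : IsCompact (A * B⁻¹) := hAc.mul hBc.inv
  have hXi : IsCompact (B * A⁻¹) := hBc.mul hAc.inv
  have hE : {a} * A * B⁻¹ * {b⁻¹} = {a} * ((A * B⁻¹) * {b⁻¹}) := by
    rw [mul_assoc {a} A B⁻¹, mul_assoc]
  have hEinv : ({a} * A * B⁻¹ * {b⁻¹})⁻¹ = {b} * ((B * A⁻¹) * {a⁻¹}) := by
    rw [mul_inv_rev, mul_inv_rev, mul_inv_rev, Set.inv_singleton, Set.inv_singleton,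
      inv_inv, inv_inv, ← mul_assoc B A⁻¹ {a⁻¹}]
  have hXinv : (A * B⁻¹)⁻¹ = B * A⁻¹ := by rw [mul_inv_rev, inv_inv]
  have hAinv : ({a} * A)⁻¹ = A⁻¹ * {a⁻¹} := by rw [mul_inv_rev, Set.inv_singleton]
  have hBinv : ({b} * B)⁻¹ = B⁻¹ * {b⁻¹} := by rw [mul_inv_rev, Set.inv_singleton]
  have m1 : μ ({a} * A * B⁻¹ * {b⁻¹}) = cb * μ (A * B⁻¹) := by
    rw [hE, measure_singleton_mul, hcb _ hX]
  have m2 : ν ({a} * A * B⁻¹ * {b⁻¹}) = ca * ν (A * B⁻¹) := by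
    rw [hν, hν, hEinv, hXinv, measure_singleton_mul, hca _ hXi]
  have m3 : ν ({a} * A) = ca * ν A := by
    rw [hν, hν, hAinv, hca _ hAc.inv]
  have m4 : μ (B⁻¹ * {b⁻¹}) = cb * μ B⁻¹ := hcb _ hBc.inv
  have hset : ({a} * A) * ({b} * B)⁻¹ = {a} * A * B⁻¹ * {b⁻¹} := by
    rw [hBinv, ← mul_assoc]
  constructor
  · unfold ruzsaDist
    rw [hBinv, show ({a} * A) * (B⁻¹ * {b⁻¹}) = {a} * A * B⁻¹ * {b⁻¹} from (mul_assoc _ _ _).symm,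
      m1, m2, m3, m4]
    congr 1
    simp only [ENNReal.toReal_mul]
    have hc : ca.toReal * cb.toReal ≠ 0 :=
      mul_ne_zero (ENNReal.toReal_ne_zero.2 ⟨ca0, caT⟩) (ENNReal.toReal_ne_zero.2 ⟨cb0, cbT⟩)
    rw [show ca.toReal * (ν (A * B⁻¹)).toReal * (cb.toReal * (μ (A * B⁻¹)).toReal)
        = (ca.toReal * cb.toReal) * ((ν (A * B⁻¹)).toReal * (μ (A * B⁻¹)).toReal) by ring,
      show ca.toReal * (ν A).toReal * (cb.toReal * (μ B⁻¹).toReal)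
        = (ca.toReal * cb.toReal) * ((ν A).toReal * (μ B⁻¹).toReal) by ring,
      mul_div_mul_left _ _ hc]
  · rw [m1, m2, m3, m4,
      show ca * ν (A * B⁻¹) * (cb * μ (A * B⁻¹))
        = (ca * cb) * (ν (A * B⁻¹) * μ (A * B⁻¹)) by ring,
      show ca * ν A * (cb * μ B⁻¹) = (ca * cb) * (ν A * μ B⁻¹) by ring,
      ENNReal.mul_div_mul_left _ _ (mul_ne_zero ca0 cb0) (ENNReal.mul_ne_top caT cbT)]
end

section
/- Let G be a locally compact Hausdorff topological group with left Haar measure μ, let K ≥ 1 be a real number, and let A, B ⊆ G be nonempty compact sets with μ(B) > 0. If μ(A·B) ≤ K·μ(B), then there exists a finite set Ω ⊆ A with |Ω| ≤ K such that A ⊆ Ω·B·B⁻¹. -/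
open Set Pointwise Function MeasureTheory
open scoped ENNReal

/-- **Ruzsa covering lemma (left Haar version).**
If `μ` is a left Haar measure on a locally compact Hausdorff group `G`, `K ≥ 1`, and
`A, B` are nonempty compact sets with `μ(B) > 0` and `μ(A·B) ≤ K·μ(B)`, then there is a
finite set `Ω ⊆ A` with `|Ω| ≤ K` and `A ⊆ Ω·B·B⁻¹`. -/
theorem ruzsa_covering_left
    {G : Type*} [Group G] [TopologicalSpace G] [IsTopologicalGroup G]
    [LocallyCompactSpace G] [T2Space G] [MeasurableSpace G] [BorelSpace G]
    (μ : Measure G) [μ.IsHaarMeasure]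
    (K : ℝ) (hK : 1 ≤ K)
    (A B : Set G) (hAc : IsCompact A) (hBc : IsCompact B)
    (hAne : A.Nonempty) (hBne : B.Nonempty) (hB0 : 0 < μ B)
    (hcov : μ (A * B) ≤ ENNReal.ofReal K * μ B) :
    ∃ Ω : Finset G, ↑Ω ⊆ A ∧ (Ω.card : ℝ) ≤ K ∧ A ⊆ ↑Ω * B * B⁻¹ := by
  classical
  have hBmeas : MeasurableSet B := hBc.isClosed.measurableSet
  have hBfin : μ B ≠ ∞ := (hBc.measure_lt_top).ne
  set P : Finset G → Prop := fun F => ↑F ⊆ A ∧ (↑F : Set G).PairwiseDisjoint (· • B)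
  -- key cardinality bound
  have hbound : ∀ F : Finset G, P F → (F.card : ℝ) ≤ K := by
    intro F ⟨hFA, hFd⟩
    have hsub : (⋃ ω ∈ F, ω • B) ⊆ A * B := by
      intro x hx
      simp only [Set.mem_iUnion] at hx
      obtain ⟨ω, hω, hx⟩ := hx
      obtain ⟨b, hb, rfl⟩ := hx
      exact Set.mul_mem_mul (hFA hω) hb
    have hmeas : μ (⋃ ω ∈ F, ω • B) = F.card * μ B := by
      rw [measure_biUnion_finset hFd fun ω _ => hBmeas.const_smul ω]
      simp [measure_smul, Finset.sum_const, nsmul_eq_mul]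
    have h1 : (F.card : ℝ≥0∞) * μ B ≤ ENNReal.ofReal K * μ B := by
      rw [← hmeas]
      exact le_trans (measure_mono hsub) hcov
    have h2 : (F.card : ℝ≥0∞) ≤ ENNReal.ofReal K :=
      (ENNReal.mul_le_mul_iff_left hB0.ne' hBfin).mp h1
    have : ((F.card : ℝ≥0∞)) = ENNReal.ofReal (F.card : ℝ) := by
      simp [ENNReal.ofReal_natCast]
    rw [this] at h2
    exact (ENNReal.ofReal_le_ofReal_iff (le_trans zero_le_one hK)).mp h2
  have hboundN : ∀ F : Finset G, P F → F.card ≤ ⌊K⌋₊ := fun F hF =>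
    Nat.le_floor (hbound F hF)
  -- pick maximal cardinality
  set Q : ℕ → Prop := fun n => ∃ F : Finset G, P F ∧ F.card = n
  have hQ0 : Q 0 := ⟨∅, ⟨by simp, by simp⟩, by simp⟩
  set n := Nat.findGreatest Q ⌊K⌋₊ with hn
  obtain ⟨F, hPF, hFcard⟩ : Q n :=
    Nat.findGreatest_spec (Nat.zero_le _) hQ0
  obtain ⟨hFA, hFd⟩ := hPF
  refine ⟨F, hFA, hbound F ⟨hFA, hFd⟩, ?_⟩
  intro a ha
  by_cases haF : a ∈ F
  · obtain ⟨b, hb⟩ := hBne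
    exact ⟨a * b, Set.mul_mem_mul (Finset.mem_coe.mpr haF) hb, b⁻¹, Set.inv_mem_inv.mpr hb,
      by group⟩
  by_cases H : ∀ b ∈ F, Disjoint (a • B) (b • B)
  · exfalso
    have hP' : P (insert a F) := by
      refine ⟨by rw [Finset.coe_insert]; exact Set.insert_subset ha hFA, ?_⟩
      rw [Finset.coe_insert]
      exact hFd.insert fun b hb _ => H b hb
    have hcard : (insert a F).card = n + 1 := by
      rw [Finset.card_insert_of_notMem haF, hFcard]
    have hle : n + 1 ≤ ⌊K⌋₊ := hcard ▸ hboundN _ hP'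
    exact Nat.findGreatest_is_greatest (Nat.lt_succ_self n) hle ⟨_, hP', hcard⟩
  · push_neg at H
    obtain ⟨b, hbF, hnd⟩ := H
    obtain ⟨c, hc1, hc2⟩ := Set.not_disjoint_iff.mp hnd
    obtain ⟨β, hβ, hc1⟩ := hc1
    obtain ⟨β', hβ', hc2⟩ := hc2
    refine ⟨b * β', Set.mul_mem_mul (Finset.mem_coe.mpr hbF) hβ', β⁻¹,
      Set.inv_mem_inv.mpr hβ, ?_⟩
    have heq : a * β = b * β' := by
      simp only [smul_eq_mul] at hc1 hc2; rw [hc1, hc2]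
    have : b * β' * β⁻¹ = a := by rw [← heq]; group
    exact this
end

section
/- Let G be a locally compact Hausdorff topological group, μ a left Haar measure on G, and ν the right Haar measure defined by ν(E) = μ(E⁻¹). Let A ⊆ G be compact with ν(A) > 0 and let ε be a real number with 0 < ε ≤ ν(A). Then the approximate measure stabilizer S = {g ∈ G : ν(A \ Ag) < ε} contains the identity of G, is an open subset of G, is precompact (has compact closure), and is symmetric, i.e., S = S⁻¹. -/
open Set Pointwise Function MeasureTheory
open scoped ENNReal

/-- **Basic properties of approximate measure stabilizers.**
Let `μ` be a left Haar measure on a locally compact Hausdorff group `G`, let `ν` be the right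
Haar measure `ν(E) = μ(E⁻¹)`, let `A ⊆ G` be compact with `ν(A) > 0`, and let
`0 < ε ≤ ν(A)`.  Then the approximate measure stabilizer `S = {g : ν(A \ Ag) < ε}` contains
the identity, is open, is precompact, and is symmetric. -/
theorem approx_stabilizer_basic
    {G : Type*} [Group G] [TopologicalSpace G] [IsTopologicalGroup G]
    [LocallyCompactSpace G] [T2Space G] [MeasurableSpace G] [BorelSpace G]
    (μ ν : Measure G) [μ.IsHaarMeasure] (hν : ∀ E : Set G, ν E = μ E⁻¹)
    (A : Set G) (hAc : IsCompact A) (hA0 : 0 < ν A)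
    (ε : ℝ) (hε : 0 < ε) (hεA : ENNReal.ofReal ε ≤ ν A)
    (S : Set G) (hS : S = {g : G | ν (A \ (A * {g})) < ENNReal.ofReal ε}) :
    (1 : G) ∈ S ∧ IsOpen S ∧ IsCompact (closure S) ∧ S = S⁻¹ := by
  set ε' := ENNReal.ofReal ε with hε'
  have hε'0 : ε' ≠ 0 := (ENNReal.ofReal_pos.mpr hε).ne'
  have hε'top : ε' ≠ ∞ := ENNReal.ofReal_ne_top
  have hAm : MeasurableSet A := hAc.isClosed.measurableSet
  have hAgc : ∀ g : G, IsCompact (A * {g}) := fun g => by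
    rw [Set.mul_singleton]; exact hAc.image (continuous_mul_right g)
  have hAgm : ∀ g : G, MeasurableSet (A * {g}) := fun g =>
    (hAgc g).isClosed.measurableSet
  -- finiteness of ν on compacts
  have hνfin : ∀ K : Set G, IsCompact K → ν K ≠ ∞ := fun K hK => by
    rw [hν]; exact hK.inv.measure_lt_top.ne
  -- right invariance of ν
  have hνinv : ∀ (E : Set G) (g : G), ν (E * {g}) = ν E := by
    intro E g
    rw [hν, hν, mul_inv_rev, Set.inv_singleton, Set.singleton_mul]
    exact measure_smul (μ := μ) g⁻¹ E⁻¹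
  -- cancel right translation
  have hcancel : ∀ (X : Set G) (g : G), (X * {g}) * {g⁻¹} = X := by
    intro X g
    rw [mul_assoc, Set.singleton_mul_singleton, mul_inv_cancel, Set.singleton_one, mul_one]
  have hdiffmul : ∀ (X Y : Set G) (g : G), (X \ Y) * {g} = (X * {g}) \ (Y * {g}) := by
    intro X Y g
    simp only [Set.mul_singleton]
    exact Set.image_diff (mul_left_injective g) _ _
  -- translation of the defining quantity
  have htrans : ∀ g : G, ν (A \ (A * {g})) = ν ((A * {g⁻¹}) \ A) := by
    intro g
    rw [← hνinv (A \ (A * {g})) g⁻¹, hdiffmul, hcancel]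
  -- swap lemma: ν (A*{g} \ A) = ν (A \ A*{g})
  have hswap : ∀ g : G, ν ((A * {g}) \ A) = ν (A \ (A * {g})) := by
    intro g
    have h1 : ν ((A * {g}) ∩ A) + ν ((A * {g}) \ A) = ν (A * {g}) :=
      measure_inter_add_diff _ hAm
    have h2 : ν (A ∩ (A * {g})) + ν (A \ (A * {g})) = ν A :=
      measure_inter_add_diff _ (hAgm g)
    rw [hνinv A g] at h1
    rw [Set.inter_comm] at h1
    have hfin : ν (A ∩ (A * {g})) ≠ ∞ :=
      fun h => hνfin A hAc (top_le_iff.mp (h ▸ measure_mono inter_subset_left : (∞ : ℝ≥0∞) ≤ ν A))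
    exact (ENNReal.add_right_inj hfin).mp (h1.trans h2.symm)
  -- ONE
  have h1S : (1 : G) ∈ S := by
    rw [hS]
    simp only [mem_setOf_eq, Set.singleton_one, mul_one, diff_self, measure_empty]
    exact pos_iff_ne_zero.mpr hε'0
  -- SYMMETRY
  have hsymm : S = S⁻¹ := by
    have key : ∀ g : G, ν (A \ (A * {g})) = ν (A \ (A * {g⁻¹})) := fun g => by
      rw [htrans g, hswap g⁻¹]
    ext g
    rw [hS, Set.mem_inv, mem_setOf_eq, mem_setOf_eq, key g]
  -- PRECOMPACT
  have hcompact : IsCompact (closure S) := by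
    have hsub : S ⊆ A⁻¹ * A := by
      intro g hg
      rw [hS, mem_setOf_eq] at hg
      have hne : ν (A ∩ (A * {g})) ≠ 0 := by
        intro h0
        have h2 : ν (A ∩ (A * {g})) + ν (A \ (A * {g})) = ν A :=
          measure_inter_add_diff _ (hAgm g)
        rw [h0, zero_add] at h2
        exact absurd (h2 ▸ hg) (not_lt.mpr hεA)
      obtain ⟨x, hxA, hxAg⟩ := nonempty_of_measure_ne_zero hne
      rw [Set.mul_singleton] at hxAg
      obtain ⟨a, ha, rfl⟩ := hxAg
      have : a⁻¹ * (a * g) ∈ A⁻¹ * A := Set.mul_mem_mul (Set.inv_mem_inv.mpr ha) hxA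
      rwa [inv_mul_cancel_left] at this
    exact (hAc.inv.mul hAc).closure_of_subset hsub
  -- OPEN
  have hopen : IsOpen S := by
    -- comparison with the canonical regular Haar measure
    set ρ : Measure G := Measure.haar (G := G) with hρ
    set c : NNReal := Measure.haarScalarFactor μ ρ with hc
    have hc0 : (c : ℝ≥0∞) ≠ 0 := by
      exact_mod_cast (Measure.haarScalarFactor_pos_of_isHaarMeasure μ ρ).ne'
    have hctop : (c : ℝ≥0∞) ≠ ∞ := ENNReal.coe_ne_top
    have hcs : ∀ s : Set G, IsCompact (closure s) → μ s = c • ρ s := fun s hs =>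
      Measure.measure_isMulInvariant_eq_smul_of_isCompact_closure μ ρ hs
    set k : Set G := A⁻¹ with hk
    have hkc : IsCompact k := hAc.inv
    have hkcl : IsClosed k := hkc.isClosed
    rw [isOpen_iff_mem_nhds]
    intro g₀ hg₀
    rw [hS, mem_setOf_eq] at hg₀
    set δ : ℝ≥0∞ := ε' - ν (A \ (A * {g₀})) with hδ
    have hδ0 : δ ≠ 0 := by
      rw [hδ, ← pos_iff_ne_zero]
      exact tsub_pos_of_lt hg₀
    have hδc : δ / (c : ℝ≥0∞) ≠ 0 := by
      simp [ENNReal.div_eq_top, ENNReal.div_eq_zero_iff, hδ0, hctop]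
    have hev : ∀ᶠ u in nhds (1 : G), ρ (u • k \ k) < δ / (c : ℝ≥0∞) :=
      eventually_nhds_one_measure_smul_diff_lt hkc hkcl hδc
    have hcont : Filter.Tendsto (fun g : G => g * g₀⁻¹) (nhds g₀) (nhds (1 : G)) := by
      have := (continuous_mul_right g₀⁻¹).tendsto g₀
      rwa [mul_inv_cancel] at this
    have hev2 : ∀ᶠ g in nhds g₀, ρ ((g * g₀⁻¹) • k \ k) < δ / (c : ℝ≥0∞) :=
      hcont.eventually hev
    filter_upwards [hev2] with g hg
    rw [hS, mem_setOf_eq]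
    -- ν (A \ A*{g}) ≤ ν (A \ A*{g₀}) + ν (A*{g₀} \ A*{g})
    have hsplit : ν (A \ (A * {g})) ≤ ν (A \ (A * {g₀})) + ν ((A * {g₀}) \ (A * {g})) := by
      refine le_trans (measure_mono ?_) (measure_union_le _ _)
      intro x hx
      by_cases h : x ∈ A * {g₀}
      · exact Or.inr ⟨h, hx.2⟩
      · exact Or.inl ⟨hx.1, h⟩
    -- translate the second term
    have heq : ν ((A * {g₀}) \ (A * {g})) = μ ((g * g₀⁻¹) • k \ k) := by
      have e1 : ((A * {g₀}) \ (A * {g})) * {g₀⁻¹} = (A \ (A * (({g} : Set G) * {g₀⁻¹}))) := by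
        rw [hdiffmul, hcancel, mul_assoc]
      have e2 : ({g} : Set G) * {g₀⁻¹} = ({g * g₀⁻¹} : Set G) :=
        Set.singleton_mul_singleton
      calc ν ((A * {g₀}) \ (A * {g}))
          = ν (A \ (A * {g * g₀⁻¹})) := by rw [← hνinv _ g₀⁻¹, e1, e2]
        _ = ν ((A * {(g * g₀⁻¹)⁻¹}) \ A) := htrans _
        _ = μ (((A * {(g * g₀⁻¹)⁻¹}) \ A)⁻¹) := hν _
        _ = μ ((g * g₀⁻¹) • k \ k) := by
            congr 1
            have : ((A * {(g * g₀⁻¹)⁻¹}) \ A)⁻¹ = (A * {(g * g₀⁻¹)⁻¹})⁻¹ \ A⁻¹ := by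
              simp [Set.diff_eq, Set.inter_inv, Set.compl_inv]
            rw [this, mul_inv_rev, Set.inv_singleton, inv_inv, Set.singleton_mul]
            rfl
    have hcls : IsCompact (closure ((g * g₀⁻¹) • k \ k)) := by
      refine IsCompact.closure_of_subset ?_ diff_subset
      exact hkc.smul _
    have hlt : μ ((g * g₀⁻¹) • k \ k) < δ := by
      rw [hcs _ hcls]
      calc (c : ℝ≥0∞) * ρ ((g * g₀⁻¹) • k \ k)
          < (c : ℝ≥0∞) * (δ / (c : ℝ≥0∞)) := by
            exact ENNReal.mul_lt_mul_right hc0 hctop hg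
        _ ≤ δ := ENNReal.mul_div_le
    calc ν (A \ (A * {g})) ≤ ν (A \ (A * {g₀})) + ν ((A * {g₀}) \ (A * {g})) := hsplit
      _ < ν (A \ (A * {g₀})) + δ := by
          rw [heq]
          exact ENNReal.add_lt_add_left (hg₀.trans_le le_top).ne hlt
      _ = ε' := add_tsub_cancel_of_le hg₀.le
  exact ⟨h1S, hopen, hcompact, hsymm⟩
end

section
/- Let G be a locally compact Hausdorff topological group, μ a left Haar measure on G, and ν the right Haar measure defined by ν(E) = μ(E⁻¹). Let K ≥ 1 and let A ⊆ G be a compact set with μ(A) > 0 such that ν(A·A⁻¹) ≤ K·μ(A) and max_{a∈A} Δ_G(a) = 1, where Δ_G is the modular function of G. Let S = {g ∈ G : ν(A \ Ag) < (2K−1)·ν(A)/(2K)}. Then ν(S) ≥ μ(A)/(2K). -/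
open Set Pointwise Function MeasureTheory
open scoped ENNReal

open scoped NNReal
set_option linter.unusedSectionVars false

section ApproxStabAux

variable {G : Type*} [Group G] [TopologicalSpace G] [IsTopologicalGroup G]
    [LocallyCompactSpace G] [T2Space G] [MeasurableSpace G] [BorelSpace G]

/-- Right invariance of `ν` (defined by `ν E = μ E⁻¹`) on all sets. -/
private lemma aux_nu_mul_singleton (μ ν : Measure G) [μ.IsMulLeftInvariant]
    (hν : ∀ E : Set G, ν E = μ E⁻¹) (X : Set G) (b : G) :
    ν (X * {b}) = ν X := by
  rw [hν, hν, mul_inv_rev, inv_singleton, singleton_mul, image_mul_left, inv_inv]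
  exact measure_preimage_mul μ b X⁻¹

private lemma aux_mu_image_mul_left (μ : Measure G) [μ.IsMulLeftInvariant]
    (b : G) (X : Set G) : μ ((fun x => b * x) '' X) = μ X := by
  have : (fun x => b * x) '' X = (b * ·) '' X := rfl
  rw [this, image_mul_left]
  exact measure_preimage_mul μ b⁻¹ X

private lemma aux_inter_mul_singleton (X Y : Set G) (t : G) :
    (X ∩ Y) * {t} = (X * {t}) ∩ (Y * {t}) := by
  simp only [mul_singleton]
  exact Set.image_inter (mul_left_injective t)

private lemma aux_mul_singleton_mul (X : Set G) (t t' : G) :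
    (X * {t}) * {t'} = X * {t * t'} := by
  rw [mul_assoc, Set.singleton_mul_singleton]

private lemma aux_mul_singleton_one (X : Set G) : X * ({1} : Set G) = X := by
  rw [Set.singleton_one, mul_one]

end ApproxStabAux

/-- Bonferroni-type inequality. -/
private lemma aux_bonferroni {α : Type*} [MeasurableSpace α] (ν : Measure α)
    (C : ℕ → Set α) (hC : ∀ i, MeasurableSet (C i)) :
    ∀ n : ℕ, ∑ i ∈ Finset.range n, ν (C i) ≤
      ν (⋃ i ∈ Finset.range n, C i) +
        ∑ i ∈ Finset.range n, ∑ j ∈ Finset.range i, ν (C j ∩ C i) := by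
  intro n
  induction n with
  | zero => simp
  | succ n ih =>
      have hUn : (⋃ i ∈ Finset.range (n + 1), C i) =
          (⋃ i ∈ Finset.range n, C i) ∪ C n := by
        rw [Finset.range_add_one, Finset.set_biUnion_insert, Set.union_comm]
      have e : ν ((⋃ i ∈ Finset.range n, C i) ∪ C n)
            + ν ((⋃ i ∈ Finset.range n, C i) ∩ C n)
          = ν (⋃ i ∈ Finset.range n, C i) + ν (C n) :=
        measure_union_add_inter _ (hC n)
      have hsub : ν ((⋃ i ∈ Finset.range n, C i) ∩ C n)
          ≤ ∑ j ∈ Finset.range n, ν (C j ∩ C n) := by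
        have : (⋃ i ∈ Finset.range n, C i) ∩ C n
            = ⋃ j ∈ Finset.range n, (C j ∩ C n) := by
          rw [Set.iUnion₂_inter]
        rw [this]
        exact measure_biUnion_finset_le _ _
      calc ∑ i ∈ Finset.range (n+1), ν (C i)
          = (∑ i ∈ Finset.range n, ν (C i)) + ν (C n) := Finset.sum_range_succ _ n
        _ ≤ (ν (⋃ i ∈ Finset.range n, C i) +
              ∑ i ∈ Finset.range n, ∑ j ∈ Finset.range i, ν (C j ∩ C i)) + ν (C n) := by
            exact add_le_add_left ih _
        _ = (ν (⋃ i ∈ Finset.range n, C i) + ν (C n)) +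
              ∑ i ∈ Finset.range n, ∑ j ∈ Finset.range i, ν (C j ∩ C i) := by ring
        _ = (ν ((⋃ i ∈ Finset.range n, C i) ∪ C n)
              + ν ((⋃ i ∈ Finset.range n, C i) ∩ C n)) +
              ∑ i ∈ Finset.range n, ∑ j ∈ Finset.range i, ν (C j ∩ C i) := by rw [e]
        _ ≤ ν (⋃ i ∈ Finset.range (n+1), C i) +
              (∑ j ∈ Finset.range n, ν (C j ∩ C n) +
               ∑ i ∈ Finset.range n, ∑ j ∈ Finset.range i, ν (C j ∩ C i)) := by
            rw [hUn]
            calc ν ((⋃ i ∈ Finset.range n, C i) ∪ C n)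
                  + ν ((⋃ i ∈ Finset.range n, C i) ∩ C n)
                  + ∑ i ∈ Finset.range n, ∑ j ∈ Finset.range i, ν (C j ∩ C i)
                ≤ ν ((⋃ i ∈ Finset.range n, C i) ∪ C n)
                  + ∑ j ∈ Finset.range n, ν (C j ∩ C n)
                  + ∑ i ∈ Finset.range n, ∑ j ∈ Finset.range i, ν (C j ∩ C i) := by
                  exact add_le_add_left (add_le_add_right hsub _) _
              _ = _ := by ring
        _ = ν (⋃ i ∈ Finset.range (n+1), C i) +
              ∑ i ∈ Finset.range (n+1), ∑ j ∈ Finset.range i, ν (C j ∩ C i) := by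
            rw [Finset.sum_range_succ]
            ring
set_option linter.unusedSectionVars false

/-- `μ A ≤ ν A` for compact `A` on which the modular function is at most `1`. -/
private lemma aux_mu_le_nu
    {G : Type*} [Group G] [TopologicalSpace G] [IsTopologicalGroup G]
    [LocallyCompactSpace G] [T2Space G] [MeasurableSpace G] [BorelSpace G]
    (μ ν : Measure G) [μ.IsHaarMeasure] (hν : ∀ E : Set G, ν E = μ E⁻¹)
    (Δ : G → ℝ) (hΔpos : ∀ x, 0 < Δ x) (hΔcont : Continuous Δ)
    (hΔhom : ∀ x y : G, Δ (x * y) = Δ x * Δ y)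
    (hΔmod : ∀ E : Set G, MeasurableSet E → ∀ x : G,
      μ (E * {x}) = ENNReal.ofReal (Δ x) * μ E)
    (A : Set G) (hAc : IsCompact A) (hA0 : 0 < μ A)
    (hΔA : ∀ a ∈ A, Δ a ≤ 1) :
    μ A ≤ ν A := by
  classical
  have hD : Measurable fun y : G => ENNReal.ofReal (Δ y) :=
    ENNReal.measurable_ofReal.comp hΔcont.measurable
  set ω : Measure G := ν.withDensity (fun y => ENNReal.ofReal (Δ y)) with hω
  -- behaviour of ν under left translations
  have hmap : ∀ g : G, Measure.map (fun x => g * x) ν = ENNReal.ofReal (Δ g) • ν := by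
    intro g
    ext F hF
    rw [Measure.map_apply (measurable_const_mul g) hF, Measure.smul_apply, smul_eq_mul,
      hν, hν]
    have hset : ((fun x => g * x) ⁻¹' F)⁻¹ = F⁻¹ * {g} := by
      ext x
      simp only [Set.mem_inv, Set.mem_preimage, mul_singleton, Set.mem_image]
      constructor
      · intro h
        exact ⟨x * g⁻¹, by simpa [mul_inv_rev] using h, by group⟩
      · rintro ⟨y, hy, rfl⟩
        simpa [mul_inv_rev] using hy
    rw [hset, hΔmod F⁻¹ hF.inv g]
  have hΔg_ne_zero : ∀ g : G, ENNReal.ofReal (Δ g) ≠ 0 :=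
    fun g => (ENNReal.ofReal_pos.mpr (hΔpos g)).ne'
  -- ω is left invariant
  haveI hωinv : ω.IsMulLeftInvariant := by
    constructor
    intro g
    ext F hF
    have hpre : MeasurableSet ((fun x => g * x) ⁻¹' F) := hF.preimage (measurable_const_mul g)
    rw [Measure.map_apply (measurable_const_mul g) hF, hω, withDensity_apply _ hpre,
      withDensity_apply _ hF]
    have key : ∀ y : G, ENNReal.ofReal (Δ y) =
        (ENNReal.ofReal (Δ g))⁻¹ * ENNReal.ofReal (Δ (g * y)) := by
      intro y
      rw [hΔhom, ENNReal.ofReal_mul (hΔpos g).le, ← mul_assoc,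
        ENNReal.inv_mul_cancel (hΔg_ne_zero g) ENNReal.ofReal_ne_top, one_mul]
    calc ∫⁻ y in (fun x => g * x) ⁻¹' F, ENNReal.ofReal (Δ y) ∂ν
        = ∫⁻ y in (fun x => g * x) ⁻¹' F,
            (ENNReal.ofReal (Δ g))⁻¹ * ENNReal.ofReal (Δ (g * y)) ∂ν := by
          exact lintegral_congr fun y => key y
      _ = (ENNReal.ofReal (Δ g))⁻¹ *
            ∫⁻ y in (fun x => g * x) ⁻¹' F, ENNReal.ofReal (Δ (g * y)) ∂ν := by
          exact lintegral_const_mul _ ((hD.comp (measurable_const_mul g)))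
      _ = (ENNReal.ofReal (Δ g))⁻¹ *
            ∫⁻ z in F, ENNReal.ofReal (Δ z) ∂(Measure.map (fun x => g * x) ν) := by
          rw [setLIntegral_map hF hD (measurable_const_mul g)]
      _ = (ENNReal.ofReal (Δ g))⁻¹ * (ENNReal.ofReal (Δ g) *
            ∫⁻ z in F, ENNReal.ofReal (Δ z) ∂ν) := by
          rw [hmap g, Measure.restrict_smul, lintegral_smul_measure, smul_eq_mul]
      _ = ∫⁻ z in F, ENNReal.ofReal (Δ z) ∂ν := by
          rw [← mul_assoc, ENNReal.inv_mul_cancel (hΔg_ne_zero g) ENNReal.ofReal_ne_top,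
            one_mul]
  -- ω is finite on compacts
  haveI hωfin : IsFiniteMeasureOnCompacts ω := by
    constructor
    intro K hK
    obtain ⟨c, hc⟩ : ∃ c : ℝ, ∀ y ∈ Δ '' K, y ≤ c := by
      rcases K.eq_empty_or_nonempty with h | h
      · exact ⟨0, by simp [h]⟩
      · obtain ⟨c, hc⟩ := (hK.image hΔcont).bddAbove
        exact ⟨c, fun y hy => hc hy⟩
    have hνK : ν K < ⊤ := by
      rw [hν]
      exact hK.inv.measure_lt_top
    have : ω K ≤ ENNReal.ofReal c * ν K := by
      rw [hω, withDensity_apply _ hK.isClosed.measurableSet]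
      calc ∫⁻ y in K, ENNReal.ofReal (Δ y) ∂ν
          ≤ ∫⁻ _ in K, ENNReal.ofReal c ∂ν := by
            apply setLIntegral_mono measurable_const
            intro y hy
            exact ENNReal.ofReal_le_ofReal (hc _ ⟨y, hy, rfl⟩)
        _ = ENNReal.ofReal c * ν K := by
            rw [setLIntegral_const]
    exact lt_of_le_of_lt this (ENNReal.mul_lt_top ENNReal.ofReal_lt_top hνK)
  -- uniqueness of Haar measure on compacts
  have huniq : ∀ s : Set G, IsCompact s →
      ω s = (Measure.haarScalarFactor ω μ : ℝ≥0∞) * μ s := by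
    intro s hs
    have h's : IsCompact (closure s) := by
      rw [hs.isClosed.closure_eq]; exact hs
    have := Measure.measure_isMulInvariant_eq_smul_of_isCompact_closure ω μ h's
    simpa [ENNReal.smul_def, smul_eq_mul] using this
  set c : ℝ≥0 := Measure.haarScalarFactor ω μ with hc
  -- Δ ≤ 1 on A gives ω A ≤ ν A
  have hωA : ω A ≤ ν A := by
    rw [hω, withDensity_apply _ hAc.isClosed.measurableSet]
    calc ∫⁻ y in A, ENNReal.ofReal (Δ y) ∂ν
        ≤ ∫⁻ _ in A, 1 ∂ν := by
          apply setLIntegral_mono measurable_const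
          intro y hy
          simpa using ENNReal.ofReal_le_ofReal (hΔA y hy)
      _ = ν A := by rw [setLIntegral_one]
  -- Δ ≥ 1 on A⁻¹ gives ω A⁻¹ ≥ ν A⁻¹ = μ A
  have hΔone : Δ 1 = 1 := by
    have h := hΔhom 1 1
    rw [one_mul] at h
    have := hΔpos 1
    nlinarith
  have hωAinv : μ A ≤ ω A⁻¹ := by
    have hmeas : MeasurableSet A⁻¹ := hAc.inv.isClosed.measurableSet
    rw [hω, withDensity_apply _ hmeas]
    have : μ A = ν A⁻¹ := by rw [hν, inv_inv]
    rw [this]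
    calc ν A⁻¹ = ∫⁻ _ in A⁻¹, 1 ∂ν := by rw [setLIntegral_one]
      _ ≤ ∫⁻ y in A⁻¹, ENNReal.ofReal (Δ y) ∂ν := by
          apply setLIntegral_mono (hD)
          intro y hy
          have h1 : Δ y⁻¹ ≤ 1 := hΔA _ hy
          have h2 : Δ y * Δ y⁻¹ = 1 := by rw [← hΔhom, mul_inv_cancel, hΔone]
          have h3 : (1 : ℝ) ≤ Δ y := by
            have := hΔpos y⁻¹
            nlinarith
          simpa using ENNReal.ofReal_le_ofReal h3
  have e1 : (c : ℝ≥0∞) * μ A ≤ ν A := by rw [← huniq A hAc]; exact hωA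
  have e2 : μ A ≤ (c : ℝ≥0∞) * ν A := by
    have := huniq A⁻¹ hAc.inv
    rw [this] at hωAinv
    calc μ A ≤ (c : ℝ≥0∞) * μ A⁻¹ := hωAinv
      _ = (c : ℝ≥0∞) * ν A := by rw [hν]
  -- conclude
  by_contra hcon
  push_neg at hcon
  have hc0 : (c : ℝ≥0∞) ≠ 0 := by
    intro h
    rw [h, zero_mul] at e2
    exact absurd (lt_of_lt_of_le hA0 e2) (lt_irrefl 0)
  have : (c : ℝ≥0∞) * ν A < (c : ℝ≥0∞) * μ A :=
    by have := ENNReal.mul_lt_mul_left hc0 ENNReal.coe_ne_top hcon; rwa [mul_comm, mul_comm (μ A)] at this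
  exact absurd (lt_of_le_of_lt (e2.trans this.le) (lt_of_le_of_lt e1 hcon)) (lt_irrefl _)
/-- **Measure of the approximate stabilizer (Proposition 4.?(i)).**
Let `μ` be a left Haar measure on a locally compact Hausdorff group `G`, `ν(E) = μ(E⁻¹)` the
associated right Haar measure, and `Δ` the modular function of `G`. Let `K ≥ 1` and let
`A ⊆ G` be compact with `μ(A) > 0`, `ν(A·A⁻¹) ≤ K·μ(A)`, and `max_{a ∈ A} Δ(a) = 1`.
Then the approximate stabilizer `S = {g : ν(A \ Ag) < (2K−1)·ν(A)/(2K)}` satisfies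
`ν(S) ≥ μ(A)/(2K)`. -/
theorem approx_stabilizer_measure_lower_bound
    {G : Type*} [Group G] [TopologicalSpace G] [IsTopologicalGroup G]
    [LocallyCompactSpace G] [T2Space G] [MeasurableSpace G] [BorelSpace G]
    (μ ν : Measure G) [μ.IsHaarMeasure] (hν : ∀ E : Set G, ν E = μ E⁻¹)
    (Δ : G → ℝ) (hΔpos : ∀ x, 0 < Δ x) (hΔcont : Continuous Δ)
    (hΔhom : ∀ x y : G, Δ (x * y) = Δ x * Δ y)
    (hΔmod : ∀ E : Set G, MeasurableSet E → ∀ x : G,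
      μ (E * {x}) = ENNReal.ofReal (Δ x) * μ E)
    (K : ℝ) (hK : 1 ≤ K)
    (A : Set G) (hAc : IsCompact A) (hA0 : 0 < μ A)
    (hAA : ν (A * A⁻¹) ≤ ENNReal.ofReal K * μ A)
    (hΔA : IsGreatest (Δ '' A) 1)
    (S : Set G)
    (hS : S = {g : G | ν (A \ (A * {g})) <
      ENNReal.ofReal ((2 * K - 1) / (2 * K)) * ν A}) :
    μ A / ENNReal.ofReal (2 * K) ≤ ν S := by
  classical
  have hAm : MeasurableSet A := hAc.isClosed.measurableSet
  have hXc : ∀ g : G, IsCompact (A * {g}) := by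
    intro g; rw [mul_singleton]; exact hAc.image (continuous_mul_right g)
  have hXm : ∀ g : G, MeasurableSet (A * {g}) := fun g => (hXc g).isClosed.measurableSet
  have mfin : μ A ≠ ⊤ := hAc.measure_lt_top.ne
  have nfin : ν A ≠ ⊤ := by rw [hν]; exact hAc.inv.measure_lt_top.ne
  have hKpos : (0:ℝ) < 2 * K := by linarith
  have hmn : μ A ≤ ν A := aux_mu_le_nu μ ν hν Δ hΔpos hΔcont hΔhom hΔmod A hAc hA0
      (fun a ha => hΔA.2 ⟨a, ha, rfl⟩)
  have n0 : 0 < ν A := lt_of_lt_of_le hA0 hmn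
  set d : ℝ≥0∞ := ENNReal.ofReal (1 / (2 * K)) with hd
  set c : ℝ≥0∞ := ENNReal.ofReal ((2 * K - 1) / (2 * K)) with hc
  have hcd : c + d = 1 := by
    rw [hc, hd, ← ENNReal.ofReal_add (div_nonneg (by linarith) (by linarith))
      (div_nonneg (by linarith) (by linarith))]
    have : (2 * K - 1) / (2 * K) + 1 / (2 * K) = 1 := by field_simp; ring
    rw [this, ENNReal.ofReal_one]
  have split : ∀ g : G, ν (A \ (A * {g})) + ν (A ∩ (A * {g})) = ν A :=
    fun g => measure_diff_add_inter A (hXm g)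
  have miff : ∀ g : G, g ∈ S ↔ d * ν A < ν (A ∩ (A * {g})) := by
    intro g
    have h2 : ν (A \ (A * {g})) + ν (A ∩ (A * {g})) = c * ν A + d * ν A := by
      rw [split g, ← add_mul, hcd, one_mul]
    have ifin : ν (A ∩ (A * {g})) ≠ ⊤ :=
      ne_top_of_le_ne_top nfin (measure_mono Set.inter_subset_left)
    have cfin : c * ν A ≠ ⊤ := ENNReal.mul_ne_top ENNReal.ofReal_ne_top nfin
    rw [hS, mem_setOf_eq]
    constructor
    · intro h
      have h3 : ν (A \ (A * {g})) + ν (A ∩ (A * {g})) < c * ν A + ν (A ∩ (A * {g})) :=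
        ENNReal.add_lt_add_right ifin h
      rw [h2] at h3
      exact (ENNReal.add_lt_add_iff_left cfin).mp h3
    · intro h
      have h3 : c * ν A + d * ν A < c * ν A + ν (A ∩ (A * {g})) :=
        ENNReal.add_lt_add_left cfin h
      rw [← h2] at h3
      exact (ENNReal.add_lt_add_iff_right ifin).mp h3
  have notS : ∀ g : G, g ∉ S → ν (A ∩ (A * {g})) ≤ d * ν A :=
    fun g hg => not_lt.mp (fun hlt => hg ((miff g).mpr hlt))
  have hsym : ∀ g : G, ν (A ∩ (A * {g})) = ν (A ∩ (A * {g⁻¹})) := by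
    intro g
    have h1 : (A ∩ (A * {g})) * {g⁻¹} = (A * {g⁻¹}) ∩ A := by
      rw [aux_inter_mul_singleton, aux_mul_singleton_mul, mul_inv_cancel,
        aux_mul_singleton_one]
    calc ν (A ∩ (A * {g})) = ν ((A ∩ (A * {g})) * {g⁻¹}) :=
          (aux_nu_mul_singleton μ ν hν _ _).symm
      _ = ν ((A * {g⁻¹}) ∩ A) := by rw [h1]
      _ = ν (A ∩ (A * {g⁻¹})) := by rw [inter_comm]
  have Smem : ∀ g : G, g ∈ S ↔ g⁻¹ ∈ S := by
    intro g; rw [miff, miff, hsym g]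
  have Sinv : S⁻¹ = S := by
    ext g; rw [Set.mem_inv]; exact (Smem g).symm
  have μS : μ S = ν S := by rw [hν S, Sinv]
  have pairb : ∀ b b' : G, b' ∉ (fun x => b * x) '' S →
      ν ((A * {b⁻¹}) ∩ (A * {b'⁻¹})) ≤ d * ν A := by
    intro b b' hnb
    have hg : b⁻¹ * b' ∉ S := by
      intro h
      exact hnb ⟨b⁻¹ * b', h, by simp⟩
    have h1 : ((A * {b⁻¹}) ∩ (A * {b'⁻¹})) * {b'} = (A * {b⁻¹ * b'}) ∩ A := by
      rw [aux_inter_mul_singleton, aux_mul_singleton_mul, aux_mul_singleton_mul,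
        inv_mul_cancel, aux_mul_singleton_one]
    calc ν ((A * {b⁻¹}) ∩ (A * {b'⁻¹}))
        = ν (((A * {b⁻¹}) ∩ (A * {b'⁻¹})) * {b'}) :=
          (aux_nu_mul_singleton μ ν hν _ _).symm
      _ = ν (A ∩ (A * {b⁻¹ * b'})) := by rw [h1, inter_comm]
      _ ≤ d * ν A := notS _ hg
  have greedy : ∀ n : ℕ,
      (∃ m ≤ n, ∃ b : ℕ → G, (∀ i, i < m → b i ∈ A) ∧
          A ⊆ ⋃ i ∈ Finset.range m, (fun x => b i * x) '' S) ∨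
      (∃ b : ℕ → G, (∀ i, i < n + 1 → b i ∈ A) ∧
          ∀ i j, i < j → j < n + 1 →
            ν ((A * {(b i)⁻¹}) ∩ (A * {(b j)⁻¹})) ≤ d * ν A) := by
    intro n
    induction n with
    | zero =>
        obtain ⟨a₀, ha₀, -⟩ := hΔA.1
        right
        exact ⟨fun _ => a₀, fun i _ => ha₀, fun i j hij hj => by omega⟩
    | succ n ih =>
        rcases ih with ⟨m, hm, hb⟩ | ⟨b, hbA, hbp⟩
        · exact Or.inl ⟨m, hm.trans (Nat.le_succ n), hb⟩
        · by_cases hcov : A ⊆ ⋃ i ∈ Finset.range (n + 1), (fun x => b i * x) '' S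
          · exact Or.inl ⟨n + 1, le_refl _, b, fun i hi => hbA i hi, hcov⟩
          · obtain ⟨a, haA, hanot⟩ := not_subset.mp hcov
            right
            refine ⟨fun i => if i = n + 1 then a else b i, ?_, ?_⟩
            · intro i hi
              by_cases h : i = n + 1
              · simpa [h] using haA
              · have hi' : i < n + 1 := by omega
                simpa [h] using hbA i hi'
            · intro i j hij hj
              have hne_i : ¬ (i = n + 1) := by omega
              by_cases h : j = n + 1
              · have hin : a ∉ (fun x => b i * x) '' S := by
                  intro hmem
                  exact hanot (Set.mem_iUnion₂.mpr
                    ⟨i, Finset.mem_range.mpr (by omega), hmem⟩)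
                simpa [h, hne_i] using pairb (b i) a hin
              · have hj' : j < n + 1 := by omega
                simpa [h, hne_i] using hbp i j hij hj'
  set M : ℕ := Nat.floor (2 * K) with hM
  rcases greedy M with ⟨m, hmM, b, hbA, hcov⟩ | ⟨b, hbA, hbp⟩
  · -- A is covered by m ≤ 2K translates of S
    have h1 : μ A ≤ ∑ i ∈ Finset.range m, μ ((fun x => b i * x) '' S) :=
      (measure_mono hcov).trans (measure_biUnion_finset_le _ _)
    have h2 : ∀ i : ℕ, μ ((fun x => b i * x) '' S) = ν S := by
      intro i
      rw [aux_mu_image_mul_left μ (b i) S, μS]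
    rw [Finset.sum_congr rfl (fun i _ => h2 i), Finset.sum_const, Finset.card_range,
      nsmul_eq_mul] at h1
    have h3 : (m : ℝ≥0∞) ≤ ENNReal.ofReal (2 * K) := by
      rw [← ENNReal.ofReal_natCast m]
      apply ENNReal.ofReal_le_ofReal
      calc (m:ℝ) ≤ (M:ℝ) := Nat.cast_le.mpr hmM
        _ ≤ 2 * K := Nat.floor_le (by linarith)
    rw [ENNReal.div_le_iff_le_mul (Or.inl (ENNReal.ofReal_pos.mpr hKpos).ne')
      (Or.inl ENNReal.ofReal_ne_top)]
    calc μ A ≤ (m : ℝ≥0∞) * ν S := h1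
      _ ≤ ENNReal.ofReal (2 * K) * ν S := mul_le_mul_left h3 _
      _ = ν S * ENNReal.ofReal (2 * K) := mul_comm _ _
  · -- impossible: M + 1 almost-disjoint translates inside A * A⁻¹
    exfalso
    have hbon := aux_bonferroni ν (fun i => A * {(b i)⁻¹}) (fun i => hXm _) (M + 1)
    have hL : ∑ i ∈ Finset.range (M + 1), ν (A * {(b i)⁻¹}) = ((M:ℝ≥0∞) + 1) * ν A := by
      rw [Finset.sum_congr rfl (fun i _ => aux_nu_mul_singleton μ ν hν A ((b i)⁻¹)),
        Finset.sum_const, Finset.card_range, nsmul_eq_mul]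
      push_cast
      ring
    have hU : ν (⋃ i ∈ Finset.range (M + 1), A * {(b i)⁻¹}) ≤ ENNReal.ofReal K * μ A := by
      refine (measure_mono ?_).trans hAA
      refine Set.iUnion₂_subset fun i hi => ?_
      apply Set.mul_subset_mul_left
      rw [Set.singleton_subset_iff]
      exact Set.inv_mem_inv.mpr (hbA i (Finset.mem_range.mp hi))
    set T : ℕ := ∑ i ∈ Finset.range (M + 1), i with hT
    have hP : ∑ i ∈ Finset.range (M + 1), ∑ j ∈ Finset.range i,
        ν ((A * {(b j)⁻¹}) ∩ (A * {(b i)⁻¹})) ≤ (T : ℝ≥0∞) * (d * ν A) := by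
      calc ∑ i ∈ Finset.range (M + 1), ∑ j ∈ Finset.range i,
            ν ((A * {(b j)⁻¹}) ∩ (A * {(b i)⁻¹}))
          ≤ ∑ i ∈ Finset.range (M + 1), ∑ _j ∈ Finset.range i, (d * ν A) := by
            refine Finset.sum_le_sum fun i hi => Finset.sum_le_sum fun j hj => ?_
            exact hbp j i (Finset.mem_range.mp hj) (Finset.mem_range.mp hi)
        _ = ∑ i ∈ Finset.range (M + 1), (i : ℝ≥0∞) * (d * ν A) := by
            refine Finset.sum_congr rfl fun i _ => ?_
            rw [Finset.sum_const, Finset.card_range, nsmul_eq_mul]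
        _ = (∑ i ∈ Finset.range (M + 1), (i : ℝ≥0∞)) * (d * ν A) := by
            rw [Finset.sum_mul]
        _ = (T : ℝ≥0∞) * (d * ν A) := by
            rw [hT]
            exact congrArg (· * (d * ν A)) (Nat.cast_sum _ _).symm
    have hmain : ((M:ℝ≥0∞) + 1) * ν A ≤
        ENNReal.ofReal K * μ A + (T : ℝ≥0∞) * (d * ν A) := by
      rw [← hL]
      exact hbon.trans (add_le_add hU hP)
    have hfin1 : ENNReal.ofReal K * μ A ≠ ⊤ :=
      ENNReal.mul_ne_top ENNReal.ofReal_ne_top mfin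
    have hfin2 : (T : ℝ≥0∞) * (d * ν A) ≠ ⊤ :=
      ENNReal.mul_ne_top (ENNReal.natCast_ne_top T)
        (ENNReal.mul_ne_top ENNReal.ofReal_ne_top nfin)
    have hreal := ENNReal.toReal_mono (ENNReal.add_ne_top.mpr ⟨hfin1, hfin2⟩) hmain
    rw [ENNReal.toReal_add hfin1 hfin2, ENNReal.toReal_mul, ENNReal.toReal_mul,
      ENNReal.toReal_mul, ENNReal.toReal_mul, ENNReal.toReal_natCast,
      ENNReal.toReal_ofReal (by linarith : (0:ℝ) ≤ K), hd,
      ENNReal.toReal_ofReal (by positivity : (0:ℝ) ≤ 1 / (2 * K))] at hreal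
    have hone : ((1:ℝ≥0∞) + 0).toReal = 1 := by norm_num
    have hlhs : (((M:ℝ≥0∞) + 1)).toReal = (M:ℝ) + 1 := by
      rw [ENNReal.toReal_add (ENNReal.natCast_ne_top M) ENNReal.one_ne_top]
      simp
    rw [hlhs] at hreal
    -- hreal : ((M:ℝ)+1) * (ν A).toReal ≤ K * (μ A).toReal + T * (1/(2K) * (ν A).toReal)
    set x : ℝ := (ν A).toReal with hx'
    set y : ℝ := (μ A).toReal with hy'
    have hx : 0 < x := ENNReal.toReal_pos n0.ne' nfin
    have hyx : y ≤ x := (ENNReal.toReal_le_toReal mfin nfin).mpr hmn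
    have h2T : ((T:ℝ)) * 2 = ((M:ℝ) + 1) * (M:ℝ) := by
      have h := Finset.sum_range_id_mul_two (M + 1)
      have : (T * 2 : ℕ) = ((M + 1) * M : ℕ) := by
        rw [hT]; simpa using h
      exact_mod_cast this
    have hnK : 2 * K < (M:ℝ) + 1 := Nat.lt_floor_add_one (2 * K)
    have hMK : (M:ℝ) ≤ 2 * K := Nat.floor_le (by linarith)
    have r2 : 2 * K * (((M:ℝ) + 1) * x) ≤ 2 * K * (K * y + (T:ℝ) * (1 / (2 * K) * x)) :=
      mul_le_mul_of_nonneg_left hreal (by linarith)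
    have r3 : 2 * K * (K * y + (T:ℝ) * (1 / (2 * K) * x)) = 2 * K^2 * y + (T:ℝ) * x := by
      field_simp
    have r4 : 2 * K * (((M:ℝ) + 1) * x) ≤ 2 * K^2 * x + (T:ℝ) * x := by
      have hy2 : 2 * K^2 * y ≤ 2 * K^2 * x :=
        mul_le_mul_of_nonneg_left hyx (by positivity)
      nlinarith [r2, r3]
    have r4' : (((M:ℝ) + 1) * (4 * K)) * x ≤ (4 * K^2 + (M:ℝ) * ((M:ℝ) + 1)) * x := by
      nlinarith [r4, h2T]
    have r5 : ((M:ℝ) + 1) * (4 * K) ≤ 4 * K^2 + (M:ℝ) * ((M:ℝ) + 1) :=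
      le_of_mul_le_mul_right r4' hx
    have hu : 0 ≤ ((M:ℝ) + 1 - 2 * K) * (2 * K - (M:ℝ)) :=
      mul_nonneg (by linarith) (by linarith)
    nlinarith [r5, hu, hK]
end
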